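/- The sum over all multi-indices m ∈ ℕ^N with |m| ≤ p of (m_1+1)^2 equals (N+p+2 choose N+2) + (N+p+1 choose N+2). -/

import Mathlib

/-- The finset of multi-indices `m : Fin N → ℕ` with `|m| = ∑ i, m i ≤ p`. -/
def multiIdx (N p : ℕ) : Finset (Fin N → ℕ) :=
  (Fintype.piFinset fun _ : Fin N => Finset.range (p + 1)).filter
    fun m => ∑ i, m i ≤ p

lemma mem_multiIdx {N p : ℕ} {m : Fin N → ℕ} :
    m ∈ multiIdx N p ↔ ∑ i, m i ≤ p := by
  simp only [multiIdx, Finset.mem_filter, Fintype.mem_piFinset, Finset.mem_range]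
  constructor
  · exact fun h => h.2
  · intro h
    refine ⟨fun i => ?_, h⟩
    have := Finset.single_le_sum (f := m) (fun i _ => Nat.zero_le _) (Finset.mem_univ i)
    omega

/-- Hockey stick. -/
lemma hockey (k : ℕ) : ∀ n : ℕ, ∑ q ∈ Finset.range n, (q + k).choose k = (n + k).choose (k + 1)
  | 0 => by simp
  | (n + 1) => by
    rw [Finset.sum_range_succ, hockey k n, Nat.add_right_comm n 1 k,
      Nat.choose_succ_succ' (n + k) k, Nat.add_comm]

lemma sum_multiIdx_snoc (N p : ℕ) (f : (Fin (N + 1) → ℕ) → ℕ) :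
    ∑ m ∈ multiIdx (N + 1) p, f m =
      ∑ j ∈ Finset.range (p + 1), ∑ m ∈ multiIdx N (p - j), f (Fin.snoc m j) := by
  rw [← Finset.sum_sigma (Finset.range (p + 1)) (fun j => multiIdx N (p - j))
      (fun x => f (Fin.snoc x.2 x.1))]
  refine Finset.sum_nbij' (fun m => ⟨m (Fin.last N), Fin.init m⟩)
    (fun x => Fin.snoc x.2 x.1) ?_ ?_ ?_ ?_ ?_
  · intro m hm
    rw [mem_multiIdx] at hm
    rw [Fin.sum_univ_castSucc] at hm
    have h1 : m (Fin.last N) ≤ p := by omega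
    simp only [Finset.mem_sigma, Finset.mem_range, mem_multiIdx]
    constructor
    · omega
    · have : ∑ i : Fin N, Fin.init m i = ∑ i : Fin N, m (Fin.castSucc i) := by
        apply Finset.sum_congr rfl; intros; rfl
      rw [this]; omega
  · intro x hx
    simp only [Finset.mem_sigma, Finset.mem_range, mem_multiIdx] at hx
    rw [mem_multiIdx, Fin.sum_univ_castSucc]
    simp only [Fin.snoc_castSucc, Fin.snoc_last]
    omega
  · intro m _
    simp [Fin.snoc_init_self]
  · intro x hx
    simp only [Fin.init_snoc, Fin.snoc_last]
  · intro m _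
    simp [Fin.snoc_init_self]

lemma multiIdx_zero (q : ℕ) : multiIdx 0 q = {fun i => i.elim0} := by
  ext m
  simp only [mem_multiIdx, Finset.mem_singleton]
  constructor
  · intro _; funext i; exact i.elim0
  · intro _; simp

lemma sum_multiIdx_sq_aux (M : ℕ) : ∀ p : ℕ,
    ∑ m ∈ multiIdx (M + 1) p, (m ⟨0, M.succ_pos⟩ + 1) ^ 2 =
      (M + 1 + p + 2).choose (M + 1 + 2) + (M + 1 + p + 1).choose (M + 1 + 2) := by
  induction M with
  | zero =>
    intro p
    rw [sum_multiIdx_snoc 0 p]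
    have : ∀ j ∈ Finset.range (p + 1),
        (∑ m ∈ multiIdx 0 (p - j), ((Fin.snoc m j : Fin 1 → ℕ) ⟨0, Nat.succ_pos 0⟩ + 1) ^ 2)
          = (j + 1) ^ 2 := by
      intro j _
      rw [multiIdx_zero, Finset.sum_singleton]
      congr 1
    rw [Finset.sum_congr rfl this]
    -- ∑ j ∈ range (p+1), (j+1)^2 = (p+3).choose 3 + (p+2).choose 3
    have key : ∀ j : ℕ, (j + 1) ^ 2 = (j + 2).choose 2 + (j + 1).choose 2 := by
      intro j
      induction j with
      | zero => rfl
      | succ n ih =>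
        show (n + 2) ^ 2 = (n + 3).choose 2 + (n + 2).choose 2
        have h1 : (n + 3).choose 2 = (n + 2).choose 1 + (n + 2).choose 2 :=
          Nat.choose_succ_succ' (n + 2) 1
        have h2 : (n + 2).choose 2 = (n + 1).choose 1 + (n + 1).choose 2 :=
          Nat.choose_succ_succ' (n + 1) 1
        rw [Nat.choose_one_right] at h1 h2
        nlinarith [ih, h1, h2]
    rw [Finset.sum_congr rfl (fun j _ => key j), Finset.sum_add_distrib]
    have h1 : ∑ j ∈ Finset.range (p + 1), (j + 2).choose 2 = (p + 3).choose 3 := by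
      have := hockey 2 (p + 1)
      simpa [Nat.add_comm] using this
    have h2 : ∑ j ∈ Finset.range (p + 1), (j + 1).choose 2 = (p + 2).choose 3 := by
      rw [Finset.sum_range_succ']
      have e : ∀ j, (j + 1 + 1).choose 2 = (j + 2).choose 2 := fun j => rfl
      rw [Finset.sum_congr rfl (fun j _ => e j), show (0 + 1 : ℕ).choose 2 = 0 from rfl,
        Nat.add_zero]
      have := hockey 2 p
      simpa [Nat.add_comm] using this
    rw [h1, h2, show 0 + 1 + p + 2 = p + 3 by omega, show 0 + 1 + p + 1 = p + 2 by omega]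
  | succ M ih =>
    intro p
    rw [sum_multiIdx_snoc (M + 1) p]
    have step : ∀ j ∈ Finset.range (p + 1),
        (∑ m ∈ multiIdx (M + 1) (p - j),
          ((Fin.snoc m j : Fin (M + 2) → ℕ) ⟨0, Nat.succ_pos (M + 1)⟩ + 1) ^ 2)
          = (M + 1 + (p - j) + 2).choose (M + 1 + 2) + (M + 1 + (p - j) + 1).choose (M + 1 + 2) := by
      intro j _
      rw [← ih (p - j)]
      apply Finset.sum_congr rfl
      intro m _
      congr 2
    rw [Finset.sum_congr rfl step, Finset.sum_add_distrib]
    have r1 : ∑ j ∈ Finset.range (p + 1), (M + 1 + (p - j) + 2).choose (M + 3)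
        = (M + p + 4).choose (M + 4) := by
      rw [← Finset.sum_range_reflect]
      have e : ∀ j ∈ Finset.range (p + 1),
          (M + 1 + (p - (p + 1 - 1 - j)) + 2).choose (M + 3) = (j + (M + 3)).choose (M + 3) := by
        intro j hj
        simp only [Finset.mem_range] at hj
        congr 1
        omega
      rw [Finset.sum_congr rfl e, hockey (M + 3) (p + 1)]
      congr 1
      omega
    have r2 : ∑ j ∈ Finset.range (p + 1), (M + 1 + (p - j) + 1).choose (M + 3)
        = (M + p + 3).choose (M + 4) := by
      rw [← Finset.sum_range_reflect]
      have e : ∀ j ∈ Finset.range (p + 1),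
          (M + 1 + (p - (p + 1 - 1 - j)) + 1).choose (M + 3) = (j + (M + 2)).choose (M + 3) := by
        intro j hj
        simp only [Finset.mem_range] at hj
        congr 1
        omega
      rw [Finset.sum_congr rfl e, Finset.sum_range_succ']
      have e2 : ∀ j, (j + 1 + (M + 2)).choose (M + 3) = (j + (M + 3)).choose (M + 3) := by
        intro j; congr 1; omega
      rw [Finset.sum_congr rfl (fun j _ => e2 j), hockey (M + 3) p]
      simp only [Nat.zero_add]
      rw [Nat.choose_eq_zero_of_lt (by omega : M + 2 < M + 3), Nat.add_zero]
      congr 1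
      omega
    have g1 : M + 3 = M + 1 + 2 := by omega
    rw [← g1] at *
    rw [r1, r2]
    congr 2 <;> omega

theorem sum_multiIdx_sq {N p : ℕ} (hN : 1 ≤ N) :
    ∑ m ∈ multiIdx N p, (m ⟨0, by omega⟩ + 1) ^ 2 =
      (N + p + 2).choose (N + 2) + (N + p + 1).choose (N + 2) := by
  obtain ⟨M, rfl⟩ : ∃ M, N = M + 1 := ⟨N - 1, by omega⟩
  exact sum_multiIdx_sq_aux M p
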